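/- Let N_1,...,N_ℓ be subsets of a finite set V and fix an index i. Suppose that for every subset Y ⊆ N_i with |Y| = j there exists a 2-element subset p ⊆ N_i \ Y with p ⊄ N_r for all r ≠ i. Then one can greedily construct j+1 pairs p^{(0)},...,p^{(j)}, each a 2-subset of N_i private to N_i, together with chosen elements g^{(s)} ∈ p^{(s)} such that g^{(0)},...,g^{(j)} are pairwise distinct and p^{(s)} ∩ {g^{(0)},...,g^{(s-1)}} = ∅ for all s. -/

import Mathlib

/-- Greedy selection of private pairs with pairwise distinct anchors. -/
theorem greedy_private_pairs {α : Type*} [DecidableEq α] (ℓ : ℕ)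
    (N : Fin ℓ → Finset α) (i : Fin ℓ) (j : ℕ)
    (hstep : ∀ s ≤ j, ∀ Y ⊆ N i, Y.card = s →
      ∃ p ⊆ N i \ Y, p.card = 2 ∧ ∀ r, r ≠ i → ¬ p ⊆ N r) :
    ∃ (p : Fin (j + 1) → Finset α) (g : Fin (j + 1) → α),
      (∀ s, (p s).card = 2 ∧ p s ⊆ N i ∧ (∀ r, r ≠ i → ¬ p s ⊆ N r) ∧ g s ∈ p s) ∧
      Function.Injective g ∧
      (∀ s s' : Fin (j + 1), s' < s → g s' ∉ p s) := by
  suffices h : ∀ k, k ≤ j → ∃ (p : Fin (k + 1) → Finset α) (g : Fin (k + 1) → α),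
      (∀ s, (p s).card = 2 ∧ p s ⊆ N i ∧ (∀ r, r ≠ i → ¬ p s ⊆ N r) ∧ g s ∈ p s) ∧
      Function.Injective g ∧
      (∀ s s' : Fin (k + 1), s' < s → g s' ∉ p s) from h j le_rfl
  intro k
  induction k with
  | zero =>
    intro _
    obtain ⟨p0, hp0sub, hcard, hpriv⟩ := hstep 0 (Nat.zero_le j) ∅ (Finset.empty_subset _) rfl
    have hne : p0.Nonempty := Finset.card_pos.mp (by omega)
    obtain ⟨g0, hg0⟩ := hne
    refine ⟨fun _ => p0, fun _ => g0, ?_, ?_, ?_⟩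
    · intro s
      exact ⟨hcard, fun x hx => (Finset.mem_sdiff.mp (hp0sub hx)).1, hpriv, hg0⟩
    · intro a b _
      exact Fin.ext (by omega)
    · intro s s' hlt
      exact absurd hlt (by omega)
  | succ k ih =>
    intro hk
    obtain ⟨p, g, hprops, hinj, hdisj⟩ := ih (by omega)
    set Y : Finset α := Finset.image g Finset.univ with hY
    have hYsub : Y ⊆ N i := by
      intro x hx
      obtain ⟨s, _, rfl⟩ := Finset.mem_image.mp hx
      exact (hprops s).2.1 (hprops s).2.2.2
    have hYcard : Y.card = k + 1 := by
      rw [hY, Finset.card_image_of_injective _ hinj, Finset.card_univ, Fintype.card_fin]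
    obtain ⟨p', hp'sub, hp'card, hp'priv⟩ := hstep (k + 1) hk Y hYsub hYcard
    have hp'N : p' ⊆ N i := fun x hx => (Finset.mem_sdiff.mp (hp'sub hx)).1
    have hp'Y : ∀ x ∈ p', x ∉ Y := fun x hx => (Finset.mem_sdiff.mp (hp'sub hx)).2
    obtain ⟨g', hg'⟩ := Finset.card_pos.mp (by omega : 0 < p'.card)
    have hgY : ∀ t : Fin (k + 1), g t ∈ Y := fun t =>
      Finset.mem_image.mpr ⟨t, Finset.mem_univ t, rfl⟩
    refine ⟨Fin.snoc p p', Fin.snoc g g', ?_, ?_, ?_⟩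
    · intro s
      refine Fin.lastCases ?_ ?_ s
      · rw [Fin.snoc_last, Fin.snoc_last]
        exact ⟨hp'card, hp'N, hp'priv, hg'⟩
      · intro t
        rw [Fin.snoc_castSucc, Fin.snoc_castSucc]
        exact hprops t
    · intro a b hab
      rcases Fin.eq_castSucc_or_eq_last a with ⟨ta, rfl⟩ | rfl <;>
        rcases Fin.eq_castSucc_or_eq_last b with ⟨tb, rfl⟩ | rfl
      · rw [Fin.snoc_castSucc, Fin.snoc_castSucc] at hab
        rw [hinj hab]
      · rw [Fin.snoc_castSucc, Fin.snoc_last] at hab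
        exact absurd (hab ▸ hgY ta) (hp'Y g' hg')
      · rw [Fin.snoc_castSucc, Fin.snoc_last] at hab
        exact absurd (hab.symm ▸ hgY tb) (hp'Y g' hg')
      · rfl
    · intro s s' hlt
      rcases Fin.eq_castSucc_or_eq_last s with ⟨t, rfl⟩ | rfl
      · have hs' : s' ≠ Fin.last (k + 1) := fun h =>
          absurd (lt_of_le_of_lt (Fin.le_last _) (h ▸ hlt)) (lt_irrefl _)
        obtain ⟨t', rfl⟩ := Fin.exists_castSucc_eq.mpr hs'
        rw [Fin.snoc_castSucc, Fin.snoc_castSucc]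
        exact hdisj t t' (by exact_mod_cast hlt)
      · rw [Fin.snoc_last]
        have hs' : s' ≠ Fin.last (k + 1) := fun h => absurd (h ▸ hlt) (lt_irrefl _)
        obtain ⟨t, rfl⟩ := Fin.exists_castSucc_eq.mpr hs'
        rw [Fin.snoc_castSucc]
        exact fun h => hp'Y _ h (hgY t)
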